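/- Let Q be a complex vector space with basis y_1,...,y_{u+v}, and let A_{u,v}Q ⊆ S^u Q ⊗ Λ^v Q be the span of all elements y_{m_1}···y_{m_u} ⊗ y_{n_1}∧···∧y_{n_v} where {m_1,...,m_u,n_1,...,n_v} = {1,...,u+v} (each index used exactly once). Then the restriction to A_{u,v}Q of the algebraic exterior derivative ∧_{u,v}: S^u Q ⊗ Λ^v Q → S^{u-1} Q ⊗ Λ^{v+1} Q, defined on monomials by l_1···l_u ⊗ ω ↦ Σ_s l_1···l̂_s···l_u ⊗ l_s ∧ ω, has rank (u+v-1 choose v). -/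

import Mathlib

open MvPolynomial TensorProduct

/-- The algebraic exterior derivative (Koszul differential)
`S^u Q ⊗ Λ^v Q → S^{u-1} Q ⊗ Λ^{v+1} Q`, given on monomials by
`x^α ⊗ ω ↦ Σ_i ∂_i(x^α) ⊗ (x_i ∧ ω)`. -/
noncomputable def Kz (m : ℕ) :
    MvPolynomial (Fin m) ℂ ⊗[ℂ] ExteriorAlgebra ℂ (Fin m → ℂ) →ₗ[ℂ]
      MvPolynomial (Fin m) ℂ ⊗[ℂ] ExteriorAlgebra ℂ (Fin m → ℂ) :=
  ∑ i : Fin m, TensorProduct.map (pderiv i).toLinearMap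
    (LinearMap.mulLeft ℂ (ExteriorAlgebra.ι ℂ (Pi.single i 1)))

/-- The generator of `A_{u,v}Q` indexed by the set `S` of wedge indices:
`(∏_{i ∉ S} y_i) ⊗ (y_{n_1} ∧ ⋯ ∧ y_{n_v})` where `S = {n_1 < ⋯ < n_v}`. -/
noncomputable def gen (m : ℕ) (S : Finset (Fin m)) :
    MvPolynomial (Fin m) ℂ ⊗[ℂ] ExteriorAlgebra ℂ (Fin m → ℂ) :=
  (∏ i ∈ Sᶜ, X i) ⊗ₜ
    ((S.sort (· ≤ ·)).map fun i => ExteriorAlgebra.ι ℂ (Pi.single i 1)).prod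

/-- The subspace `A_{u,v}Q` spanned by the elements
`y_{m_1}⋯y_{m_u} ⊗ y_{n_1}∧⋯∧y_{n_v}` with `{m_*} ⊔ {n_*} = {1,…,u+v}`. -/
noncomputable def Asub (u v : ℕ) :
    Submodule ℂ (MvPolynomial (Fin (u + v)) ℂ ⊗[ℂ] ExteriorAlgebra ℂ (Fin (u + v) → ℂ)) :=
  Submodule.span ℂ {z | ∃ S : Finset (Fin (u + v)), S.card = v ∧ z = gen (u + v) S}

namespace KoszulAux

variable {m : ℕ}

/-- Wedge product of basis vectors indexed by a list. -/
noncomputable def wdg (l : List (Fin m)) : ExteriorAlgebra ℂ (Fin m → ℂ) :=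
  (l.map fun i => ExteriorAlgebra.ι ℂ (Pi.single i (1 : ℂ))).prod

/-- Wedge product of basis vectors indexed by a finset, in increasing order. -/
noncomputable def wS (S : Finset (Fin m)) : ExteriorAlgebra ℂ (Fin m → ℂ) :=
  wdg (S.sort (· ≤ ·))

theorem gen_eq (S : Finset (Fin m)) : gen m S = (∏ i ∈ Sᶜ, X i) ⊗ₜ[ℂ] wS S := rfl

@[simp] theorem wdg_nil : wdg ([] : List (Fin m)) = 1 := rfl

theorem wdg_cons (x : Fin m) (l : List (Fin m)) :
    wdg (x :: l) = ExteriorAlgebra.ι ℂ (Pi.single x (1 : ℂ)) * wdg l := by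
  simp [wdg]

/-- The wedge of distinct basis vectors is nonzero. -/
theorem wdg_ne_zero {l : List (Fin m)} (h : l.Nodup) : wdg l ≠ 0 := by
  classical
  set n := l.length with hn
  have hι : wdg l = ExteriorAlgebra.ιMulti ℂ n (fun k => Pi.single (l.get k) (1 : ℂ)) := by
    rw [ExteriorAlgebra.ιMulti_apply, wdg]
    conv_lhs => rw [← List.ofFn_get l]
    rw [List.map_ofFn]
    rfl
  set D : (Fin m → ℂ) [⋀^Fin n]→ₗ[ℂ] ℂ :=
    (Matrix.detRowAlternating).compLinearMap
      (LinearMap.funLeft ℂ ℂ fun j : Fin n => l.get j) with hD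
  intro h0
  have hc := congrArg (ExteriorAlgebra.liftAlternating (R := ℂ)
      (Pi.single n D)) h0
  rw [hι, ExteriorAlgebra.liftAlternating_apply_ιMulti, map_zero,
    Pi.single_eq_same] at hc
  have hmat : (Matrix.of fun k j : Fin n =>
      (Pi.single (l.get k) (1 : ℂ) : Fin m → ℂ) (l.get j)) = (1 : Matrix (Fin n) (Fin n) ℂ) := by
    ext k j
    have hinj : Function.Injective l.get := List.nodup_iff_injective_get.1 h
    simp only [Matrix.of_apply, Matrix.one_apply, Pi.single_apply, hinj.eq_iff]
    by_cases hkj : k = j <;> simp [hkj, eq_comm]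
  have : D (fun k => Pi.single (l.get k) (1 : ℂ)) = 1 := by
    rw [hD]
    show Matrix.detRowAlternating
      (fun k => LinearMap.funLeft ℂ ℂ (fun j : Fin n => l.get j)
        (Pi.single (l.get k) (1 : ℂ))) = 1
    have : (fun k => LinearMap.funLeft ℂ ℂ (fun j : Fin n => l.get j)
        (Pi.single (l.get k) (1 : ℂ))) = (1 : Matrix (Fin n) (Fin n) ℂ) := by
      rw [← hmat]; rfl
    rw [this]
    exact Matrix.det_one
  rw [this] at hc
  exact one_ne_zero hc

theorem ι_anticomm (x y : Fin m → ℂ) :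
    ExteriorAlgebra.ι ℂ y * ExteriorAlgebra.ι ℂ x
      = -(ExteriorAlgebra.ι ℂ x * ExteriorAlgebra.ι ℂ y) :=
  eq_neg_of_add_eq_zero_left (ExteriorAlgebra.ι_add_mul_swap y x)

/-- Sign bookkeeping for ordered insertion. -/
theorem wdg_orderedInsert (x : Fin m) (l : List (Fin m)) :
    wdg (List.orderedInsert (· ≤ ·) x l)
      = ((-1 : ℂ) ^ (l.takeWhile fun y => decide ¬(x ≤ y)).length) •
        (ExteriorAlgebra.ι ℂ (Pi.single x (1 : ℂ)) * wdg l) := by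
  induction l with
  | nil => simp [wdg_cons]
  | cons y t ih =>
    by_cases h : x ≤ y
    · simp [List.orderedInsert, h, List.takeWhile_cons, wdg_cons]
    · rw [List.orderedInsert, if_neg h, wdg_cons, ih]
      have hp : List.takeWhile (fun z => decide ¬(x ≤ z)) (y :: t)
          = y :: List.takeWhile (fun z => decide ¬(x ≤ z)) t := by
        rw [List.takeWhile_cons]
        simp [h]
      rw [hp, List.length_cons, pow_succ, wdg_cons, mul_smul_comm]
      have hswap : ExteriorAlgebra.ι ℂ (Pi.single y (1 : ℂ)) *
          (ExteriorAlgebra.ι ℂ (Pi.single x (1 : ℂ)) * wdg t)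
          = -(ExteriorAlgebra.ι ℂ (Pi.single x (1 : ℂ)) *
            (ExteriorAlgebra.ι ℂ (Pi.single y (1 : ℂ)) * wdg t)) := by
        rw [← mul_assoc, ι_anticomm, ← mul_assoc, neg_mul]
      rw [hswap, smul_neg, mul_neg_one, neg_smul]

/-- Sorting an insertion is ordered insertion into the sorted list. -/
theorem sort_insert' {i : Fin m} {S : Finset (Fin m)} (hi : i ∉ S) :
    (insert i S).sort (· ≤ ·) = List.orderedInsert (· ≤ ·) i (S.sort (· ≤ ·)) := by
  apply List.Perm.eq_of_pairwise' (r := (· ≤ ·)) (Finset.pairwise_sort _ _)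
    (List.Pairwise.orderedInsert (r := (· ≤ ·)) i _ (Finset.pairwise_sort _ _))
  · exact (Finset.sort_perm_toList _ _).trans ((Finset.toList_insert hi).trans
      ((List.Perm.cons i (Finset.sort_perm_toList _ _).symm).trans
        (List.perm_orderedInsert _ i _).symm))

/-- The sign of inserting `i` into the wedge indexed by `S`. -/
noncomputable def eps (i : Fin m) (S : Finset (Fin m)) : ℂ :=
  (-1 : ℂ) ^ ((S.sort (· ≤ ·)).takeWhile fun y => decide ¬(i ≤ y)).length

theorem eps_mul_self (i : Fin m) (S : Finset (Fin m)) : eps i S * eps i S = 1 := by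
  rw [eps, ← pow_add, ← two_mul, pow_mul]
  norm_num

theorem eps_ne_zero (i : Fin m) (S : Finset (Fin m)) : eps i S ≠ 0 := by
  intro h
  have := eps_mul_self i S
  rw [h, mul_zero] at this
  exact zero_ne_one this

theorem ι_mul_wS {i : Fin m} {S : Finset (Fin m)} (hi : i ∉ S) :
    ExteriorAlgebra.ι ℂ (Pi.single i (1 : ℂ)) * wS S = eps i S • wS (insert i S) := by
  have h1 : wS (insert i S) = eps i S •
      (ExteriorAlgebra.ι ℂ (Pi.single i (1 : ℂ)) * wS S) := by
    rw [wS, sort_insert' hi, wdg_orderedInsert]; rfl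
  rw [h1, smul_smul, eps_mul_self, one_smul]

/-- `eps 0 S = 1`: the bottom element inserts at the front. -/
theorem eps_bot (i0 : Fin m) (h0 : ∀ y : Fin m, i0 ≤ y) (S : Finset (Fin m)) :
    eps i0 S = 1 := by
  have : ((S.sort (· ≤ ·)).takeWhile fun y => decide ¬(i0 ≤ y)) = [] := by
    cases h : S.sort (· ≤ ·) with
    | nil => rfl
    | cons a t => simp [List.takeWhile_cons, h0 a]
  rw [eps, this]
  rfl

/-- Exponent of the squarefree monomial with support `A`. -/
noncomputable def dA (A : Finset (Fin m)) : Fin m →₀ ℕ :=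
  ∑ j ∈ A, Finsupp.single j 1

theorem dA_apply (A : Finset (Fin m)) (i : Fin m) :
    dA A i = if i ∈ A then 1 else 0 := by
  classical
  simp only [dA, Finset.sum_apply', Finsupp.single_apply]
  rw [Finset.sum_ite_eq']

theorem dA_injective : Function.Injective (dA (m := m)) := by
  intro A B h
  ext i
  have := congrArg (fun f => f i) h
  simp only [dA_apply] at this
  constructor <;> intro hi <;> by_contra hc <;> simp [hi, hc] at this

theorem prodX (A : Finset (Fin m)) :
    (∏ j ∈ A, (X j : MvPolynomial (Fin m) ℂ)) = monomial (dA A) 1 := by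
  classical
  induction A using Finset.induction_on with
  | empty => simp [dA, monomial_zero']
  | insert j A hj ih =>
    rw [Finset.prod_insert hj, ih]
    have hX : (X j : MvPolynomial (Fin m) ℂ) = monomial (Finsupp.single j 1) 1 := rfl
    rw [hX, monomial_mul, one_mul]
    congr 1
    rw [dA, dA, Finset.sum_insert hj]

theorem dA_erase {A : Finset (Fin m)} {i : Fin m} (hi : i ∈ A) :
    dA A - Finsupp.single i 1 = dA (A.erase i) := by
  ext k
  simp only [Finsupp.tsub_apply, dA_apply, Finsupp.single_apply, Finset.mem_erase]
  by_cases h2 : i = k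
  · subst h2; simp [hi]
  · simp [h2, Ne.symm h2]

theorem pderiv_prodX_mem {A : Finset (Fin m)} {i : Fin m} (hi : i ∈ A) :
    pderiv i (∏ j ∈ A, (X j : MvPolynomial (Fin m) ℂ))
      = ∏ j ∈ A.erase i, (X j : MvPolynomial (Fin m) ℂ) := by
  rw [prodX, prodX, pderiv_monomial, dA_erase hi, dA_apply, if_pos hi]
  norm_num

theorem pderiv_prodX_not_mem {A : Finset (Fin m)} {i : Fin m} (hi : i ∉ A) :
    pderiv i (∏ j ∈ A, (X j : MvPolynomial (Fin m) ℂ)) = 0 := by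
  rw [prodX, pderiv_monomial, dA_apply, if_neg hi]
  norm_num

/-- The key formula: `Kz` of a generator. -/
theorem Kz_gen (S : Finset (Fin m)) :
    Kz m (gen m S) = ∑ i ∈ Sᶜ, eps i S • gen m (insert i S) := by
  classical
  have hKz : Kz m (gen m S)
      = ∑ i : Fin m, (pderiv i (∏ j ∈ Sᶜ, X j)) ⊗ₜ[ℂ]
          (ExteriorAlgebra.ι ℂ (Pi.single i 1) * wS S) := by
    rw [gen_eq, Kz, LinearMap.sum_apply]
    refine Finset.sum_congr rfl fun i _ => ?_
    rw [TensorProduct.map_tmul]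
    rfl
  rw [hKz, ← Finset.sum_subset (Finset.subset_univ Sᶜ)
    (fun i _ hiS => by rw [pderiv_prodX_not_mem hiS, zero_tmul])]
  refine Finset.sum_congr rfl fun i hi => ?_
  have hiS : i ∉ S := Finset.mem_compl.1 hi
  rw [pderiv_prodX_mem hi, ι_mul_wS hiS, tmul_smul, gen_eq, Finset.compl_insert]

theorem pderiv_pderiv_comm (i j : Fin m) (p : MvPolynomial (Fin m) ℂ) :
    pderiv i (pderiv j p) = pderiv j (pderiv i p) := by
  induction p using MvPolynomial.induction_on' with
  | monomial s a =>
    simp only [pderiv_monomial]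
    rcases eq_or_ne i j with rfl | hij
    · rfl
    · have h1 : ((s - Finsupp.single j 1 : Fin m →₀ ℕ)) i = s i := by
        rw [Finsupp.tsub_apply, Finsupp.single_apply, if_neg (Ne.symm hij), Nat.sub_zero]
      have h2 : ((s - Finsupp.single i 1 : Fin m →₀ ℕ)) j = s j := by
        rw [Finsupp.tsub_apply, Finsupp.single_apply, if_neg hij, Nat.sub_zero]
      have h3 : s - Finsupp.single j 1 - Finsupp.single i 1
          = s - Finsupp.single i 1 - Finsupp.single j 1 := by
        ext k
        simp only [Finsupp.tsub_apply, Finsupp.single_apply]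
        split_ifs <;> omega
      rw [h1, h2, h3, mul_right_comm]
  | add p q hp hq => simp [hp, hq]

/-- The `i`-th summand of `Kz`. -/
noncomputable def Fm (i : Fin m) :
    MvPolynomial (Fin m) ℂ ⊗[ℂ] ExteriorAlgebra ℂ (Fin m → ℂ) →ₗ[ℂ]
      MvPolynomial (Fin m) ℂ ⊗[ℂ] ExteriorAlgebra ℂ (Fin m → ℂ) :=
  TensorProduct.map (pderiv i).toLinearMap
    (LinearMap.mulLeft ℂ (ExteriorAlgebra.ι ℂ (Pi.single i 1)))

theorem Kz_eq : Kz m = ∑ i : Fin m, Fm i := rfl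

theorem Fm_anticomm (i j : Fin m) : Fm i ∘ₗ Fm j + Fm j ∘ₗ Fm i = 0 := by
  simp only [Fm]
  rw [← TensorProduct.map_comp, ← TensorProduct.map_comp]
  have hpd : (pderiv i).toLinearMap ∘ₗ (pderiv (R := ℂ) (σ := Fin m) j).toLinearMap
      = (pderiv j).toLinearMap ∘ₗ (pderiv i).toLinearMap :=
    LinearMap.ext fun p => pderiv_pderiv_comm i j p
  rw [(LinearMap.mulLeft_mul ℂ _ _ _).symm, (LinearMap.mulLeft_mul ℂ _ _ _).symm, hpd,
    ← TensorProduct.map_add_right]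
  have hswap : (ExteriorAlgebra.ι ℂ (Pi.single i (1 : ℂ) : Fin m → ℂ) *
        ExteriorAlgebra.ι ℂ (Pi.single j (1 : ℂ) : Fin m → ℂ))
      + (ExteriorAlgebra.ι ℂ (Pi.single j (1 : ℂ) : Fin m → ℂ) *
        ExteriorAlgebra.ι ℂ (Pi.single i (1 : ℂ) : Fin m → ℂ)) = 0 :=
    ExteriorAlgebra.ι_add_mul_swap _ _
  have hadd : LinearMap.mulLeft ℂ (ExteriorAlgebra.ι ℂ (Pi.single i (1 : ℂ) : Fin m → ℂ) *
        ExteriorAlgebra.ι ℂ (Pi.single j (1 : ℂ) : Fin m → ℂ))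
      + LinearMap.mulLeft ℂ (ExteriorAlgebra.ι ℂ (Pi.single j (1 : ℂ) : Fin m → ℂ) *
        ExteriorAlgebra.ι ℂ (Pi.single i (1 : ℂ) : Fin m → ℂ))
      = LinearMap.mulLeft ℂ (0 : ExteriorAlgebra ℂ (Fin m → ℂ)) := by
    rw [← hswap]
    exact LinearMap.ext fun z => (add_mul _ _ _).symm
  rw [hadd, LinearMap.mulLeft_zero_eq_zero, TensorProduct.map_zero_right]

theorem Kz_Kz (z : MvPolynomial (Fin m) ℂ ⊗[ℂ] ExteriorAlgebra ℂ (Fin m → ℂ)) :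
    Kz m (Kz m z) = 0 := by
  have h1 : Kz m z = ∑ j : Fin m, Fm j z := by
    rw [Kz_eq]; exact LinearMap.sum_apply _ _ _
  rw [h1, Kz_eq, LinearMap.sum_apply]
  rw [Finset.sum_congr rfl fun i _ => map_sum (Fm i) (fun j => Fm j z) Finset.univ]
  rw [← Fintype.sum_prod_type (f := fun p : Fin m × Fin m => Fm p.1 (Fm p.2 z))]
  apply Finset.sum_involution (fun p _ => (p.2, p.1))
  · intro p _
    simpa using LinearMap.congr_fun (Fm_anticomm p.1 p.2) z
  · intro p _ hf hswap
    apply hf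
    have hpp : p.2 = p.1 := congrArg Prod.fst hswap
    have h := LinearMap.congr_fun (Fm_anticomm p.1 p.2) z
    rw [hpp] at h ⊢
    simp only [LinearMap.add_apply, LinearMap.comp_apply, LinearMap.zero_apply] at h
    have h2 : (2 : ℂ) • Fm p.1 (Fm p.1 z) = 0 := by rw [two_smul]; exact h
    have h3 := congrArg (fun y => ((2 : ℂ)⁻¹) • y) h2
    simp only [smul_smul, smul_zero] at h3
    rw [show ((2 : ℂ)⁻¹ * 2) = 1 by norm_num, one_smul] at h3
    exact h3
  · intro p _; exact Finset.mem_univ _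
  · intro p _; rfl

/-- The coefficient-extraction functional used to separate the generators. -/
noncomputable def psi (T : Finset (Fin m)) :
    MvPolynomial (Fin m) ℂ ⊗[ℂ] ExteriorAlgebra ℂ (Fin m → ℂ) →ₗ[ℂ]
      ExteriorAlgebra ℂ (Fin m → ℂ) :=
  (TensorProduct.lid ℂ _).toLinearMap ∘ₗ
    TensorProduct.map (lcoeff ℂ (dA Tᶜ)) LinearMap.id

theorem psi_gen (T0 T : Finset (Fin m)) :
    psi T0 (gen m T) = if T = T0 then wS T0 else 0 := by
  classical
  rw [gen_eq, psi, LinearMap.comp_apply, TensorProduct.map_tmul]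
  have hc : (lcoeff ℂ (dA T0ᶜ)) (∏ j ∈ Tᶜ, X j) = if T = T0 then 1 else 0 := by
    rw [prodX, lcoeff_apply, coeff_monomial]
    by_cases h : T = T0
    · simp [h]
    · have hne : dA (Tᶜ) ≠ dA (T0ᶜ) := fun hh => h (by simpa using dA_injective hh)
      simp [h, hne]
  rw [hc]
  show (TensorProduct.lid ℂ _) ((if T = T0 then (1 : ℂ) else 0) ⊗ₜ[ℂ] wS T) = _
  rw [TensorProduct.lid_tmul]
  by_cases h : T = T0 <;> simp [h]

end KoszulAux

set_option maxHeartbeats 3000000 in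
/-- The restriction of the exterior derivative `∧_{u,v}` to `A_{u,v}Q` has rank
`(u+v-1) choose v`. -/
theorem koszul_rank_Auv (u v : ℕ) (hu : 1 ≤ u) (hv : 1 ≤ v) :
    Module.finrank ℂ (Submodule.map (Kz (u + v)) (Asub u v)) = (u + v - 1).choose v := by
  classical
  set m := u + v with hm
  set i0 : Fin m := ⟨0, by omega⟩ with hi0
  have hbot : ∀ y : Fin m, i0 ≤ y := fun y => by simp [hi0, Fin.le_def]
  let I := {S : Finset (Fin m) // S.card = v ∧ i0 ∉ S}
  let b : I → MvPolynomial (Fin m) ℂ ⊗[ℂ] ExteriorAlgebra ℂ (Fin m → ℂ) :=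
    fun S => Kz m (gen m S.1)
  -- linear independence of the chosen images
  have hb : LinearIndependent ℂ b := by
    rw [Fintype.linearIndependent_iff]
    intro g hg S0
    set T0 := insert i0 S0.1 with hT0
    have hg2 := congrArg (KoszulAux.psi T0) hg
    rw [map_zero, map_sum] at hg2
    have hterm : ∀ S : I, KoszulAux.psi T0 (g S • b S)
        = (if S = S0 then g S0 • KoszulAux.wS T0 else 0) := by
      intro S
      have hKz : KoszulAux.psi T0 (b S) = if S = S0 then KoszulAux.wS T0 else 0 := by
        show KoszulAux.psi T0 (Kz m (gen m S.1)) = _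
        rw [KoszulAux.Kz_gen, map_sum]
        have hterm2 : ∀ i ∈ S.1ᶜ,
            KoszulAux.psi T0 (KoszulAux.eps i S.1 • gen m (insert i S.1))
            = if i = i0 ∧ S = S0 then KoszulAux.wS T0 else 0 := by
          intro i hi
          rw [map_smul, KoszulAux.psi_gen]
          by_cases hins : insert i S.1 = T0
          · have hii0 : i = i0 := by
              by_contra hne
              have hmemT : i0 ∈ insert i S.1 := hins ▸ Finset.mem_insert_self i0 S0.1
              rcases Finset.mem_insert.1 hmemT with h | h
              · exact hne h.symm
              · exact S.2.2 h
            have hSS0 : S.1 = S0.1 := by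
              have h1 : (insert i S.1).erase i = S.1 :=
                Finset.erase_insert (Finset.mem_compl.1 hi)
              have h2 : T0.erase i0 = S0.1 := Finset.erase_insert S0.2.2
              rw [← h1, hins, hii0, h2]
            have hSeq : S = S0 := Subtype.ext hSS0
            rw [if_pos hins, if_pos ⟨hii0, hSeq⟩, hii0, hSS0,
              KoszulAux.eps_bot i0 hbot, one_smul]
          · have hnot : ¬ (i = i0 ∧ S = S0) := by
              rintro ⟨rfl, rfl⟩; exact hins rfl
            simp [hins, hnot]
        rw [Finset.sum_congr rfl hterm2]
        by_cases hS : S = S0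
        · rw [if_pos hS]
          have hmem0 : i0 ∈ S.1ᶜ := Finset.mem_compl.2 S.2.2
          rw [Finset.sum_eq_single_of_mem i0 hmem0 (fun i _ hne => by simp [hne])]
          simp [hS]
        · rw [if_neg hS]
          exact Finset.sum_eq_zero fun i _ => by simp [hS]
      rw [map_smul, hKz]
      by_cases hS : S = S0 <;> simp [hS]
    rw [Finset.sum_congr rfl (fun S _ => hterm S),
      Finset.sum_ite_eq' Finset.univ S0 (fun _ => g S0 • KoszulAux.wS T0),
      if_pos (Finset.mem_univ _)] at hg2
    have hw : KoszulAux.wS T0 ≠ 0 := KoszulAux.wdg_ne_zero (Finset.sort_nodup _ _)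
    rcases smul_eq_zero.1 hg2 with h | h
    · exact h
    · exact absurd h hw
  -- the image is the span of the chosen images
  have hmap : Submodule.map (Kz m) (Asub u v)
      = Submodule.span ℂ (Kz m '' {z | ∃ S : Finset (Fin m), S.card = v ∧ z = gen m S}) := by
    rw [Asub, Submodule.map_span]
  have hspan : Submodule.span ℂ
        (Kz m '' {z | ∃ S : Finset (Fin m), S.card = v ∧ z = gen m S})
      = Submodule.span ℂ (Set.range b) := by
    apply le_antisymm
    · rw [Submodule.span_le]
      rintro z ⟨w, hw, rfl⟩
      obtain ⟨S, hCard, rfl⟩ := hw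
      by_cases h0 : i0 ∈ S
      · set S' := S.erase i0 with hS'
        have h0' : i0 ∉ S' := Finset.notMem_erase _ _
        have hins : insert i0 S' = S := Finset.insert_erase h0
        have hz : (0 : MvPolynomial (Fin m) ℂ ⊗[ℂ] ExteriorAlgebra ℂ (Fin m → ℂ))
            = ∑ i ∈ S'ᶜ, KoszulAux.eps i S' • Kz m (gen m (insert i S')) := by
          have h := congrArg (Kz m) (KoszulAux.Kz_gen S')
          rw [KoszulAux.Kz_Kz, map_sum] at h
          simp only [map_smul] at h
          exact h
        have hmem : i0 ∈ S'ᶜ := Finset.mem_compl.2 h0'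
        rw [← Finset.add_sum_erase _ _ hmem, KoszulAux.eps_bot i0 hbot S', one_smul,
          hins] at hz
        have hrel : Kz m (gen m S)
            = -∑ i ∈ S'ᶜ.erase i0, KoszulAux.eps i S' • Kz m (gen m (insert i S')) :=
          eq_neg_of_add_eq_zero_left hz.symm
        rw [hrel]
        apply Submodule.neg_mem
        apply Submodule.sum_mem
        intro i hi
        apply Submodule.smul_mem
        have hi' : i ≠ i0 ∧ i ∈ S'ᶜ := by simpa [Finset.mem_erase] using hi
        have hiS' : i ∉ S' := Finset.mem_compl.1 hi'.2
        have hcard : (insert i S').card = v := by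
          rw [Finset.card_insert_of_notMem hiS', Finset.card_erase_of_mem h0, hCard]
          omega
        have hi0ni : i0 ∉ insert i S' := by
          rw [Finset.mem_insert]
          rintro (h | h)
          · exact hi'.1 h.symm
          · exact h0' h
        exact Submodule.subset_span ⟨⟨insert i S', hcard, hi0ni⟩, rfl⟩
      · exact Submodule.subset_span ⟨⟨S, hCard, h0⟩, rfl⟩
    · rw [Submodule.span_le]
      rintro z ⟨S, rfl⟩
      exact Submodule.subset_span ⟨gen m S.1, ⟨S.1, S.2.1, rfl⟩, rfl⟩
  rw [hmap, hspan, finrank_span_eq_card hb]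
  -- counting
  have hcount : Fintype.card I = (m - 1).choose v := by
    rw [Fintype.card_subtype]
    have hfil : Finset.univ.filter (fun S : Finset (Fin m) => S.card = v ∧ i0 ∉ S)
        = Finset.powersetCard v ({i0}ᶜ) := by
      ext S
      simp only [Finset.mem_filter, Finset.mem_univ, true_and, Finset.mem_powersetCard]
      constructor
      · rintro ⟨h1, h2⟩
        refine ⟨fun x hx => Finset.mem_compl.2 ?_, h1⟩
        simp only [Finset.mem_singleton]
        rintro rfl; exact h2 hx
      · rintro ⟨h1, h2⟩
        refine ⟨h2, fun hx => ?_⟩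
        have := Finset.mem_compl.1 (h1 hx)
        simp at this
    rw [hfil, Finset.card_powersetCard, Finset.card_compl, Finset.card_singleton]
    simp [Fintype.card_fin]
  rw [hcount]
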